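/- Let ε₀ > 0 and let P be a smooth real-valued function on Δ_{ε₀} satisfying the condition (I). Let B ∈ ℂ∖{0} and let m be a positive integer. Then there exists α ∈ ℝ such that limsup_{z → 0, z ∈ Δ̃_{ε₀}} |Re( B (iα − 1)ᵐ P_z(z)/P(z) )| = +∞, where Δ̃_{ε₀} := {z ∈ Δ_{ε₀} : P(z) ≠ 0}. -/

import Mathlib

open Filter Set Metric Complex

/-- The Wirtinger derivative `∂u/∂z = (u_x - i u_y)/2` of a real-valued function on `ℂ`. -/
noncomputable def wDeriv (u : ℂ → ℝ) (z : ℂ) : ℂ :=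
  (((fderiv ℝ u z) 1 : ℝ) - Complex.I * ((fderiv ℝ u z) Complex.I : ℝ)) / 2

/-- A smooth real function `f` on a neighborhood `U` of `0 ∈ ℂ` satisfies condition (I). -/
def ConditionI (f : ℂ → ℝ) (U : Set ℂ) : Prop :=
  (∀ k : ℕ, 1 ≤ k → ∀ b : ℂ, b ≠ 0 → ∀ B : ℝ,
    ∃ᶠ z in nhdsWithin (0:ℂ) {z ∈ U | f z ≠ 0},
      B < |(b * z ^ k * wDeriv f z / (f z : ℂ)).re|) ∧
  (∀ B : ℝ,
    ∃ᶠ z in nhdsWithin (0:ℂ) {z ∈ U | f z ≠ 0},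
      B < ‖wDeriv f z / (f z : ℂ)‖)

/-- If `c₁, c₂` are `ℝ`-linearly independent in `ℂ` and both `Re (c₁ w)`, `Re (c₂ w)` are
bounded, then `‖w‖` is bounded. -/
lemma bound_of_two (c₁ c₂ w : ℂ) (d M₁ M₂ : ℝ)
    (hd : d = c₁.re * c₂.im - c₁.im * c₂.re) (hd0 : d ≠ 0)
    (h₁ : |(c₁ * w).re| ≤ M₁) (h₂ : |(c₂ * w).re| ≤ M₂) :
    ‖w‖ ≤ ((|c₂.im| + |c₂.re|) * M₁ + (|c₁.im| + |c₁.re|) * M₂) / |d| := by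
  have e1 : d * w.re = c₂.im * (c₁ * w).re - c₁.im * (c₂ * w).re := by
    simp only [Complex.mul_re, hd]; ring
  have e2 : d * w.im = c₂.re * (c₁ * w).re - c₁.re * (c₂ * w).re := by
    simp only [Complex.mul_re, hd]; ring
  have hb1 : |d| * |w.re| ≤ |c₂.im| * M₁ + |c₁.im| * M₂ := by
    rw [← abs_mul, e1]
    refine (abs_sub _ _).trans ?_
    rw [abs_mul, abs_mul]
    gcongr <;> first | exact h₁ | exact h₂
  have hb2 : |d| * |w.im| ≤ |c₂.re| * M₁ + |c₁.re| * M₂ := by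
    rw [← abs_mul, e2]
    refine (abs_sub _ _).trans ?_
    rw [abs_mul, abs_mul]
    gcongr <;> first | exact h₁ | exact h₂
  have hw : ‖w‖ ≤ |w.re| + |w.im| := Complex.norm_le_abs_re_add_abs_im w
  rw [le_div_iff₀ (abs_pos.mpr hd0)]
  nlinarith [abs_nonneg d, mul_le_mul_of_nonneg_right hw (abs_nonneg d)]

/-- `(1 + i tan(π/(4m)))^m` has positive imaginary part. -/
lemma im_pow_pos (m : ℕ) (hm : 1 ≤ m) :
    0 < ((1 + (Real.tan (Real.pi / (4 * m)) : ℂ) * Complex.I) ^ m).im := by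
  set θ := Real.pi / (4 * m) with hθ
  have hm0 : (0:ℝ) < m := by exact_mod_cast hm
  have hθ0 : 0 < θ := by
    apply div_pos Real.pi_pos; positivity
  have hm1 : (1:ℝ) ≤ m := by exact_mod_cast hm
  have hθlt : θ < Real.pi / 2 := by
    rw [hθ, div_lt_div_iff₀ (by positivity) two_pos]
    nlinarith [Real.pi_pos, hm1]
  have hc : 0 < Real.cos θ := Real.cos_pos_of_mem_Ioo ⟨by linarith, hθlt⟩
  have hmain : ((Real.cos θ : ℂ)) ^ m * (1 + (Real.tan θ : ℂ) * Complex.I) ^ m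
      = Complex.exp ((Real.pi / 4 : ℝ) * Complex.I) := by
    rw [← mul_pow]
    have h1 : (Real.cos θ : ℂ) * (1 + (Real.tan θ : ℂ) * Complex.I)
        = Complex.exp ((θ : ℝ) * Complex.I) := by
      have ht : (Real.tan θ : ℂ) = (Real.sin θ : ℂ) / (Real.cos θ : ℂ) := by
        rw [Real.tan_eq_sin_div_cos]; push_cast; ring
      have hc' : ((Real.cos θ : ℝ) : ℂ) ≠ 0 := by exact_mod_cast hc.ne'
      have hc2 : Complex.cos (θ : ℂ) ≠ 0 := by
        rw [← Complex.ofReal_cos]; exact hc'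
      rw [ht, Complex.exp_mul_I, ← Complex.ofReal_cos, ← Complex.ofReal_sin]
      field_simp
    rw [h1, ← Complex.exp_nat_mul]
    congr 1
    have : (m : ℝ) * θ = Real.pi / 4 := by
      rw [hθ]; field_simp
    push_cast [← this]
    ring
  have him := congrArg Complex.im hmain
  rw [Complex.exp_ofReal_mul_I_im] at him
  have hsin : 0 < Real.sin (Real.pi / 4) := by
    apply Real.sin_pos_of_pos_of_lt_pi
    · positivity
    · nlinarith [Real.pi_pos]
  have hlhs : (((Real.cos θ : ℂ)) ^ m * (1 + (Real.tan θ : ℂ) * Complex.I) ^ m).im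
      = (Real.cos θ) ^ m * ((1 + (Real.tan θ : ℂ) * Complex.I) ^ m).im := by
    rw [← Complex.ofReal_pow, Complex.im_ofReal_mul]
  rw [hlhs] at him
  have hcm : 0 < (Real.cos θ) ^ m := pow_pos hc m
  nlinarith

/-- Lemma 5.2 of the paper: if `P` satisfies condition (I), `B ≠ 0`, and `m ≥ 1`, then there
exists `α ∈ ℝ` with `limsup_{z → 0, P(z) ≠ 0} |Re(B (iα − 1)ᵐ P_z(z)/P(z))| = +∞`. -/
theorem stmt_10 (ε₀ : ℝ) (hε₀ : 0 < ε₀) (P : ℂ → ℝ)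
    (hPsm : ContDiffOn ℝ (⊤ : ℕ∞) P (ball (0:ℂ) ε₀))
    (hPI : ConditionI P (ball (0:ℂ) ε₀))
    (B : ℂ) (hB : B ≠ 0) (m : ℕ) (hm : 1 ≤ m) :
    ∃ α : ℝ, ∀ M : ℝ,
      ∃ᶠ z in nhdsWithin (0:ℂ) {z ∈ ball (0:ℂ) ε₀ | P z ≠ 0},
        M < |(B * ((α:ℂ) * Complex.I - 1) ^ m * wDeriv P z / (P z : ℂ)).re| := by
  by_contra hcon
  push_neg at hcon
  set α : ℝ := Real.tan (Real.pi / (4 * m)) with hαdef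
  obtain ⟨M₁, hM₁⟩ := hcon 0
  obtain ⟨M₂, hM₂⟩ := hcon α
  set c₁ : ℂ := B * (((0:ℝ):ℂ) * Complex.I - 1) ^ m with hc₁
  set c₂ : ℂ := B * (((α:ℝ):ℂ) * Complex.I - 1) ^ m with hc₂
  set d : ℝ := c₁.re * c₂.im - c₁.im * c₂.re with hd
  have hprod : (starRingEnd ℂ) c₁ * c₂
      = (Complex.normSq B : ℂ) * ((1 - (α:ℂ) * Complex.I) ^ m) := by
    rw [hc₁, hc₂]
    have h0 : (((0:ℝ):ℂ) * Complex.I - 1) = -1 := by norm_num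
    rw [h0, map_mul, map_pow, map_neg, map_one]
    have : ((-1 : ℂ)) ^ m * (((α:ℝ):ℂ) * Complex.I - 1) ^ m
        = (1 - (α:ℂ) * Complex.I) ^ m := by
      rw [← mul_pow]; ring_nf
    calc (starRingEnd ℂ) B * (-1:ℂ) ^ m * (B * (((α:ℝ):ℂ) * Complex.I - 1) ^ m)
        = ((starRingEnd ℂ) B * B) * ((-1:ℂ) ^ m * (((α:ℝ):ℂ) * Complex.I - 1) ^ m) := by ring
      _ = (Complex.normSq B : ℂ) * ((1 - (α:ℂ) * Complex.I) ^ m) := by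
          rw [this, mul_comm ((starRingEnd ℂ) B) B, Complex.mul_conj]
  have him : ((1 - (α:ℂ) * Complex.I) ^ m).im
      = - ((1 + (α:ℂ) * Complex.I) ^ m).im := by
    have : (1 - (α:ℂ) * Complex.I) ^ m
        = (starRingEnd ℂ) ((1 + (α:ℂ) * Complex.I) ^ m) := by
      rw [map_pow]
      congr 1
      simp [Complex.ext_iff]
    rw [this, Complex.conj_im]
  have hdval : d = -(Complex.normSq B) * ((1 + (α:ℂ) * Complex.I) ^ m).im := by
    have h1 : ((starRingEnd ℂ) c₁ * c₂).im = d := by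
      simp [Complex.mul_im, hd]; ring
    rw [hprod] at h1
    rw [← h1, Complex.im_ofReal_mul, him]
    ring
  have hd0 : d ≠ 0 := by
    rw [hdval]
    have h1 : 0 < Complex.normSq B := Complex.normSq_pos.mpr hB
    have h2 := im_pow_pos m hm
    rw [← hαdef] at h2
    nlinarith
  set C : ℝ := ((|c₂.im| + |c₂.re|) * M₁ + (|c₁.im| + |c₁.re|) * M₂) / |d| with hC
  obtain ⟨z, hz1, hz2, hz3⟩ := ((hPI.2 C).and_eventually (hM₁.and hM₂)).exists
  set w : ℂ := wDeriv P z / (P z : ℂ) with hw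
  have hzz2 : |(c₁ * w).re| ≤ M₁ := by
    rw [mul_div_assoc] at hz2
    exact hz2
  have hzz3 : |(c₂ * w).re| ≤ M₂ := by
    rw [mul_div_assoc] at hz3
    exact hz3
  have hle : ‖w‖ ≤ C := bound_of_two c₁ c₂ w d M₁ M₂ hd hd0 hzz2 hzz3
  exact absurd hz1 (not_lt.mpr hle)
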